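/- Let S be the set of points (x, y) ∈ ℝ² with x² + y² = 1 and both x and y rational. Then T(S) equals the set ℚ² of all points of ℝ² with both coordinates rational. -/

import Mathlib

open Set Filter

noncomputable section

/-- The line through two points in the plane `ℝ × ℝ`. -/
def line (a b : ℝ × ℝ) : AffineSubspace ℝ (ℝ × ℝ) := affineSpan ℝ {a, b}

/-- The intersection operation `T`: the set of all intersection points of pairs of
distinct lines through pairs of distinct points of `S`. -/
def interT (S : Set (ℝ × ℝ)) : Set (ℝ × ℝ) :=
  {x | ∃ a ∈ S, ∃ b ∈ S, ∃ c ∈ S, ∃ d ∈ S,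
    a ≠ b ∧ c ≠ d ∧ line a b ≠ line c d ∧ x ∈ line a b ∧ x ∈ line c d}

/-- The set of points of `ℝ × ℝ` with both coordinates rational. -/
def ratPoints : Set (ℝ × ℝ) := {p | ∃ a b : ℚ, p = ((a : ℝ), (b : ℝ))}

lemma mem_line_iff {a b x : ℝ × ℝ} : x ∈ line a b ↔ ∃ t : ℝ, x = a + t • (b - a) := by
  have h : x = (x - a) +ᵥ a := by simp
  rw [line]
  constructor
  · intro hx
    rw [h] at hx
    obtain ⟨r, hr⟩ := (vadd_left_mem_affineSpan_pair).mp hx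
    exact ⟨r, by simp only [vsub_eq_sub] at hr; linear_combination -hr⟩
  · rintro ⟨t, rfl⟩
    have : t • (b -ᵥ a) +ᵥ a ∈ line[ℝ, a, b] := by
      rw [vadd_left_mem_affineSpan_pair]; exact ⟨t, rfl⟩
    simpa [vsub_eq_sub, vadd_eq_add, add_comm] using this

lemma smul_fst (t : ℝ) (v : ℝ × ℝ) : (t • v).1 = t * v.1 := rfl
lemma smul_snd (t : ℝ) (v : ℝ × ℝ) : (t • v).2 = t * v.2 := rfl

/-- two parallel nonzero vectors span the same line -/
lemma span_eq_of_cross {v w : ℝ × ℝ} (hv : v ≠ 0) (hw : w ≠ 0)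
    (h : v.1 * w.2 - v.2 * w.1 = 0) : (Submodule.span ℝ {v} : Submodule ℝ (ℝ × ℝ)) = Submodule.span ℝ {w} := by
  obtain ⟨r, hr, rfl⟩ : ∃ r : ℝ, r ≠ 0 ∧ v = r • w := by
    rcases eq_or_ne w.1 0 with h1 | h1
    · have hw2 : w.2 ≠ 0 := fun h2 => hw (Prod.ext h1 h2)
      have hv1 : v.1 = 0 := by
        have h' : v.1 * w.2 = 0 := by linear_combination h + v.2 * h1
        exact (mul_eq_zero.mp h').resolve_right hw2
      refine ⟨v.2 / w.2, fun hz => ?_, ?_⟩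
      · exact hv (Prod.ext hv1 (by field_simp at hz; simpa using hz))
      · refine Prod.ext ?_ ?_
        · show v.1 = v.2 / w.2 * w.1
          rw [h1, hv1, mul_zero]
        · show v.2 = v.2 / w.2 * w.2
          field_simp
    · refine ⟨v.1 / w.1, fun hz => ?_, ?_⟩
      · have hv1 : v.1 = 0 := by field_simp at hz; simpa using hz
        have hv2 : v.2 = 0 := by
          have h' : v.2 * w.1 = 0 := by linear_combination -h + w.2 * hv1
          exact (mul_eq_zero.mp h').resolve_right h1
        exact hv (Prod.ext hv1 hv2)
      · refine Prod.ext ?_ ?_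
        · show v.1 = v.1 / w.1 * w.1
          field_simp
        · show v.2 = v.1 / w.1 * w.2
          rw [div_mul_eq_mul_div, eq_div_iff h1]
          linear_combination -h
  have h1 : (Submodule.span ℝ {r • w} : Submodule ℝ (ℝ × ℝ)) ≤ Submodule.span ℝ {w} := by
    rw [Submodule.span_le, Set.singleton_subset_iff]
    exact Submodule.smul_mem _ r (Submodule.mem_span_singleton_self w)
  have h2 : (Submodule.span ℝ {w} : Submodule ℝ (ℝ × ℝ)) ≤ Submodule.span ℝ {r • w} := by
    rw [Submodule.span_le, Set.singleton_subset_iff]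
    exact Submodule.mem_span_singleton.mpr
      ⟨r⁻¹, by rw [smul_smul, inv_mul_cancel₀ hr, one_smul]⟩
  exact le_antisymm h1 h2

/-- A point on two "rational" lines is rational. -/
lemma forward_incl :
    interT {p : ℝ × ℝ | p.1 ^ 2 + p.2 ^ 2 = 1 ∧ p ∈ ratPoints} ⊆ ratPoints := by
  rintro x ⟨a, ⟨-, a1, a2, rfl⟩, b, ⟨-, b1, b2, rfl⟩, c, ⟨-, c1, c2, rfl⟩, d, ⟨-, d1, d2, rfl⟩,
    hab, hcd, hlines, hx1, hx2⟩
  obtain ⟨t, ht⟩ := mem_line_iff.mp hx1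
  obtain ⟨s, hs⟩ := mem_line_iff.mp hx2
  have ht1 : x.1 = (a1 : ℝ) + t * ((b1 : ℝ) - a1) := by rw [ht]; simp [smul_fst]
  have ht2 : x.2 = (a2 : ℝ) + t * ((b2 : ℝ) - a2) := by rw [ht]; simp [smul_snd]
  have hs1 : x.1 = (c1 : ℝ) + s * ((d1 : ℝ) - c1) := by rw [hs]; simp [smul_fst]
  have hs2 : x.2 = (c2 : ℝ) + s * ((d2 : ℝ) - c2) := by rw [hs]; simp [smul_snd]
  set A1 : ℚ := b2 - a2 with hA1
  set B1 : ℚ := a1 - b1 with hB1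
  set C1 : ℚ := A1 * a1 + B1 * a2 with hC1
  set A2 : ℚ := d2 - c2 with hA2
  set B2 : ℚ := c1 - d1 with hB2
  set C2 : ℚ := A2 * c1 + B2 * c2 with hC2
  have E1 : (A1 : ℝ) * x.1 + (B1 : ℝ) * x.2 = (C1 : ℝ) := by
    push_cast [hA1, hB1, hC1]
    rw [ht1, ht2]; ring
  have E2 : (A2 : ℝ) * x.1 + (B2 : ℝ) * x.2 = (C2 : ℝ) := by
    push_cast [hA2, hB2, hC2]
    rw [hs1, hs2]; ring
  rcases eq_or_ne (A1 * B2 - A2 * B1) 0 with hdet | hdet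
  · -- parallel case: lines coincide, contradiction
    exfalso
    apply hlines
    have hv : ((b1 : ℝ), (b2 : ℝ)) - ((a1 : ℝ), (a2 : ℝ)) ≠ 0 := sub_ne_zero.mpr hab.symm
    have hw : ((d1 : ℝ), (d2 : ℝ)) - ((c1 : ℝ), (c2 : ℝ)) ≠ 0 := sub_ne_zero.mpr hcd.symm
    have hcross : (((b1 : ℝ), (b2 : ℝ)) - ((a1 : ℝ), (a2 : ℝ))).1 *
        (((d1 : ℝ), (d2 : ℝ)) - ((c1 : ℝ), (c2 : ℝ))).2 -
        (((b1 : ℝ), (b2 : ℝ)) - ((a1 : ℝ), (a2 : ℝ))).2 *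
        (((d1 : ℝ), (d2 : ℝ)) - ((c1 : ℝ), (c2 : ℝ))).1 = 0 := by
      have : ((A1 * B2 - A2 * B1 : ℚ) : ℝ) = 0 := by exact_mod_cast hdet
      push_cast [hA1, hB1, hA2, hB2] at this
      simp only [Prod.fst_sub, Prod.snd_sub]
      linear_combination this
    apply AffineSubspace.ext_of_direction_eq
    · rw [line, line, direction_affineSpan, direction_affineSpan,
        vectorSpan_pair_rev, vectorSpan_pair_rev]
      simp only [vsub_eq_sub]
      exact span_eq_of_cross hv hw hcross
    · exact ⟨x, hx1, hx2⟩
  · -- nondegenerate case: solve the system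
    have hdetR : ((A1 * B2 - A2 * B1 : ℚ) : ℝ) ≠ 0 := by exact_mod_cast hdet
    refine ⟨(C1 * B2 - C2 * B1) / (A1 * B2 - A2 * B1), (A1 * C2 - A2 * C1) / (A1 * B2 - A2 * B1), ?_⟩
    have hx1' : x.1 = ((C1 * B2 - C2 * B1 : ℚ) : ℝ) / ((A1 * B2 - A2 * B1 : ℚ) : ℝ) := by
      rw [eq_div_iff hdetR]
      push_cast
      linear_combination (B2 : ℝ) * E1 - (B1 : ℝ) * E2
    have hx2' : x.2 = ((A1 * C2 - A2 * C1 : ℚ) : ℝ) / ((A1 * B2 - A2 * B1 : ℚ) : ℝ) := by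
      rw [eq_div_iff hdetR]
      push_cast
      linear_combination (A1 : ℝ) * E2 - (A2 : ℝ) * E1
    apply Prod.ext
    · rw [hx1']; push_cast; ring
    · rw [hx2']; push_cast; ring

lemma mem_S {q1 q2 : ℚ} (h : q1 ^ 2 + q2 ^ 2 = 1) :
    ((q1 : ℝ), (q2 : ℝ)) ∈ {p : ℝ × ℝ | p.1 ^ 2 + p.2 ^ 2 = 1 ∧ p ∈ ratPoints} :=
  ⟨by show (q1:ℝ)^2 + (q2:ℝ)^2 = 1; exact_mod_cast h, ⟨q1, q2, rfl⟩⟩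

/-- chord through a rational point `p` and a rational circle point `a` not "tangent-bad". -/
lemma chord {u v a1 a2 : ℚ} (ha : a1 ^ 2 + a2 ^ 2 = 1) (hA : a1 * u + a2 * v ≠ 1) :
    ∃ b1 b2 : ℚ, b1 ^ 2 + b2 ^ 2 = 1 ∧ ((b1 : ℝ), (b2 : ℝ)) ≠ ((a1 : ℝ), (a2 : ℝ)) ∧
      ((u : ℝ), (v : ℝ)) ∈ line ((a1 : ℝ), (a2 : ℝ)) ((b1 : ℝ), (b2 : ℝ)) := by
  have hpa : ¬(u = a1 ∧ v = a2) := by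
    rintro ⟨rfl, rfl⟩
    exact hA (by linear_combination ha)
  by_cases hp : u ^ 2 + v ^ 2 = 1
  · -- p is itself on the circle; take b = p
    refine ⟨u, v, hp, ?_, ?_⟩
    · intro h
      have h1 : (u : ℝ) = a1 := congrArg Prod.fst h
      have h2 : (v : ℝ) = a2 := congrArg Prod.snd h
      exact hpa ⟨by exact_mod_cast h1, by exact_mod_cast h2⟩
    · rw [mem_line_iff]
      exact ⟨1, by simp⟩
  · -- construct second intersection of line a p with the circle
    set V : ℚ := (u - a1) ^ 2 + (v - a2) ^ 2 with hVdef
    set A : ℚ := a1 * u + a2 * v - 1 with hAdef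
    have hV : V ≠ 0 := by
      intro h0
      have h1 : (u - a1) ^ 2 = 0 := le_antisymm (by nlinarith [sq_nonneg (v - a2)]) (sq_nonneg _)
      have h2 : (v - a2) ^ 2 = 0 := le_antisymm (by nlinarith [sq_nonneg (u - a1)]) (sq_nonneg _)
      have e1 : u = a1 := by have := pow_eq_zero_iff (n := 2) (by norm_num) |>.mp h1; linarith
      have e2 : v = a2 := by have := pow_eq_zero_iff (n := 2) (by norm_num) |>.mp h2; linarith
      exact hpa ⟨e1, e2⟩
    have hA' : A ≠ 0 := sub_ne_zero.mpr hA
    set t : ℚ := -2 * A / V with htdef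
    have ht : t ≠ 0 := div_ne_zero (by simpa using hA') hV
    have hteq : t * V = -2 * A := div_mul_cancel₀ _ hV
    refine ⟨a1 + t * (u - a1), a2 + t * (v - a2), ?_, ?_, ?_⟩
    · linear_combination (1 - 2 * t) * ha + t * hteq
    · intro h
      have h1 : ((a1 + t * (u - a1) : ℚ) : ℝ) = ((a1 : ℚ) : ℝ) := congrArg Prod.fst h
      have h2 : ((a2 + t * (v - a2) : ℚ) : ℝ) = ((a2 : ℚ) : ℝ) := congrArg Prod.snd h
      have h1q : a1 + t * (u - a1) = a1 := by exact_mod_cast h1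
      have h2q : a2 + t * (v - a2) = a2 := by exact_mod_cast h2
      have h1' : t * (u - a1) = 0 := by linarith
      have h2' : t * (v - a2) = 0 := by linarith
      rcases mul_eq_zero.mp h1' with h | h
      · exact ht h
      · rcases mul_eq_zero.mp h2' with h' | h'
        · exact ht h'
        · exact hpa ⟨by linarith [sub_eq_zero.mp h], by linarith [sub_eq_zero.mp h']⟩
    · rw [mem_line_iff]
      refine ⟨((t⁻¹ : ℚ) : ℝ), ?_⟩
      have htR : (t : ℝ) ≠ 0 := by exact_mod_cast ht
      refine Prod.ext ?_ ?_
      · show (u : ℝ) = (a1 : ℝ) + (t⁻¹ : ℚ) * ((((a1 + t * (u - a1) : ℚ)) : ℝ) - (a1 : ℝ))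
        push_cast
        field_simp
        ring
      · show (v : ℝ) = (a2 : ℝ) + (t⁻¹ : ℚ) * ((((a2 + t * (v - a2) : ℚ)) : ℝ) - (a2 : ℝ))
        push_cast
        field_simp
        ring

/-- selection of two good base points on the circle -/
lemma select (u v : ℚ) :
    ∃ a1 a2 c1 c2 : ℚ, a1 ^ 2 + a2 ^ 2 = 1 ∧ c1 ^ 2 + c2 ^ 2 = 1 ∧
      a1 * u + a2 * v ≠ 1 ∧ c1 * u + c2 * v ≠ 1 ∧
      (c1 - a1) * (v - a2) - (c2 - a2) * (u - a1) ≠ 0 := by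
  by_cases h1 : v ≠ 0 ∧ u ≠ 1 ∧ u ≠ -1
  · refine ⟨1, 0, -1, 0, by norm_num, by norm_num, ?_, ?_, ?_⟩
    · intro h; exact h1.2.1 (by linarith)
    · intro h; exact h1.2.2 (by linarith)
    · intro h; exact h1.1 (by linarith)
  by_cases h2 : u ≠ 0 ∧ v ≠ 1 ∧ v ≠ -1
  · refine ⟨0, 1, 0, -1, by norm_num, by norm_num, ?_, ?_, ?_⟩
    · intro h; exact h2.2.1 (by linarith)
    · intro h; exact h2.2.2 (by linarith)
    · intro h; exact h2.1 (by linarith)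
  push_neg at h1 h2
  -- h1 : v ≠ 0 → u ≠ 1 → u = -1   (after push_neg of ∧ chain)
  rcases eq_or_ne v 0 with hv | hv
  · rcases eq_or_ne u 0 with hu | hu
    · subst hu; subst hv
      exact ⟨1, 0, 0, 1, by norm_num, by norm_num, by norm_num, by norm_num, by norm_num⟩
    · have := h2 hu (by rw [hv]; norm_num)
      rw [hv] at this; norm_num at this
  · have hu : u = 1 ∨ u = -1 := by
      rcases eq_or_ne u 1 with h | h
      · exact Or.inl h
      · exact Or.inr (h1 hv h)
    have hu0 : u ≠ 0 := by rcases hu with rfl | rfl <;> norm_num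
    have hvv : v = 1 ∨ v = -1 := by
      rcases eq_or_ne v 1 with h | h
      · exact Or.inl h
      · exact Or.inr (h2 hu0 h)
    rcases hu with rfl | rfl <;> rcases hvv with rfl | rfl
    · exact ⟨-1, 0, 0, -1, by norm_num, by norm_num, by norm_num, by norm_num, by norm_num⟩
    · exact ⟨-1, 0, 0, 1, by norm_num, by norm_num, by norm_num, by norm_num, by norm_num⟩
    · exact ⟨1, 0, 0, -1, by norm_num, by norm_num, by norm_num, by norm_num, by norm_num⟩
    · exact ⟨1, 0, 0, 1, by norm_num, by norm_num, by norm_num, by norm_num, by norm_num⟩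

lemma reverse_incl :
    ratPoints ⊆ interT {p : ℝ × ℝ | p.1 ^ 2 + p.2 ^ 2 = 1 ∧ p ∈ ratPoints} := by
  rintro p ⟨u, v, rfl⟩
  obtain ⟨a1, a2, c1, c2, ha, hc, hAa, hAc, hcross⟩ := select u v
  obtain ⟨b1, b2, hb, hba, hpb⟩ := chord ha hAa
  obtain ⟨d1, d2, hd, hdc, hpd⟩ := chord hc hAc
  refine ⟨((a1 : ℝ), (a2 : ℝ)), mem_S ha, ((b1 : ℝ), (b2 : ℝ)), mem_S hb,
    ((c1 : ℝ), (c2 : ℝ)), mem_S hc, ((d1 : ℝ), (d2 : ℝ)), mem_S hd,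
    hba.symm, hdc.symm, ?_, hpb, hpd⟩
  intro hl
  have hc_mem : ((c1 : ℝ), (c2 : ℝ)) ∈ line ((a1 : ℝ), (a2 : ℝ)) ((b1 : ℝ), (b2 : ℝ)) := by
    rw [hl]; exact left_mem_affineSpan_pair ℝ _ _
  obtain ⟨t, htc⟩ := mem_line_iff.mp hc_mem
  obtain ⟨s, hts⟩ := mem_line_iff.mp hpb
  apply hcross
  have e1 : (c1 : ℝ) - a1 = t * ((b1 : ℝ) - a1) := by
    have := congrArg Prod.fst htc
    simp only [Prod.fst_add, Prod.fst_sub, smul_fst] at this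
    linarith [this]
  have e3 : (c2 : ℝ) - a2 = t * ((b2 : ℝ) - a2) := by
    have := congrArg Prod.snd htc
    simp only [Prod.snd_add, Prod.snd_sub, smul_snd] at this
    linarith [this]
  have e2 : (u : ℝ) - a1 = s * ((b1 : ℝ) - a1) := by
    have := congrArg Prod.fst hts
    simp only [Prod.fst_add, Prod.fst_sub, smul_fst] at this
    linarith [this]
  have e4 : (v : ℝ) - a2 = s * ((b2 : ℝ) - a2) := by
    have := congrArg Prod.snd hts
    simp only [Prod.snd_add, Prod.snd_sub, smul_snd] at this
    linarith [this]
  have key : ((c1 : ℝ) - a1) * ((v : ℝ) - a2) - ((c2 : ℝ) - a2) * ((u : ℝ) - a1) = 0 := by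
    linear_combination ((v : ℝ) - a2) * e1 - ((u : ℝ) - a1) * e3
      + t * ((b1 : ℝ) - a1) * e4 - t * ((b2 : ℝ) - a2) * e2
  exact_mod_cast key

/-- If `S` is the set of rational points on the unit circle, then `T(S) = ℚ²`. -/
theorem interT_rationalCircle_eq_ratPoints :
    interT {p : ℝ × ℝ | p.1 ^ 2 + p.2 ^ 2 = 1 ∧ p ∈ ratPoints} = ratPoints :=
  le_antisymm forward_incl reverse_incl
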